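/- Let V be a real n×n matrix all of whose complex eigenvalues (roots of its characteristic polynomial over ℂ) have strictly positive real part. Then V is invertible, the improper integral ∫_0^∞ exp(−τ·V) dτ converges (entrywise), and ∫_0^∞ exp(−τ·V) dτ = V⁻¹. -/

import Mathlib

open Matrix MeasureTheory

namespace Stmt2Aux

open Polynomial NormedSpace Filter
open scoped Nat Topology ENNReal NNReal

attribute [local instance] Matrix.linftyOpNormedRing Matrix.linftyOpNormedAlgebra

variable {N : ℕ}

lemma root_iff_mem_spectrum {𝕜 : Type*} [Field 𝕜] (M : Matrix (Fin N) (Fin N) 𝕜) (μ : 𝕜) :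
    μ ∈ spectrum 𝕜 M ↔ M.charpoly.IsRoot μ := by
  rw [spectrum.mem_iff, Matrix.isUnit_iff_isUnit_det, isUnit_iff_ne_zero, not_ne_iff,
    IsRoot.def, Matrix.charpoly, _root_.eval_det, matPolyEquiv_charmatrix,
    show (algebraMap 𝕜 (Matrix (Fin N) (Fin N) 𝕜)) μ = Matrix.scalar (Fin N) μ from rfl]
  simp only [eval_sub, eval_X, eval_C]

lemma exists_aeval_eq_exp (M : Matrix (Fin N) (Fin N) ℂ) :
    ∃ p : ℂ[X], aeval M p = exp M := by
  have hsum : Summable fun k : ℕ => (k !⁻¹ : ℂ) • M ^ k := expSeries_summable' M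
  have hten : Tendsto (fun m => ∑ k ∈ Finset.range m, (k !⁻¹ : ℂ) • M ^ k) atTop
      (𝓝 (exp M)) := by
    rw [exp_eq_tsum ℂ]
    exact hsum.hasSum.tendsto_sum_nat
  have hcl : IsClosed ((Subalgebra.toSubmodule (Polynomial.aeval (R := ℂ) M).range : Submodule ℂ _) :
      Set (Matrix (Fin N) (Fin N) ℂ)) :=
    Submodule.closed_of_finiteDimensional _
  have hmem : exp M ∈ (Polynomial.aeval (R := ℂ) M).range := by
    refine hcl.mem_of_tendsto hten (Filter.Eventually.of_forall fun m => ?_)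
    refine Submodule.sum_mem _ fun k _ => ?_
    refine Submodule.smul_mem _ _ ?_
    exact ⟨X ^ k, by simp⟩
  obtain ⟨p, hp⟩ := hmem
  exact ⟨p, hp⟩

/-- mulVec as a linear map in the matrix argument. -/
noncomputable def mulVecL (v : Fin N → ℂ) : Matrix (Fin N) (Fin N) ℂ →ₗ[ℂ] (Fin N → ℂ) where
  toFun B := B *ᵥ v
  map_add' B C := Matrix.add_mulVec B C v
  map_smul' c B := Matrix.smul_mulVec c B v

lemma eval_eq_exp_of_mem_spectrum {M : Matrix (Fin N) (Fin N) ℂ} {μ : ℂ}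
    (h : μ ∈ spectrum ℂ M) {p : ℂ[X]} (hp : aeval M p = exp M) :
    p.eval μ = Complex.exp μ := by
  obtain ⟨v, hv0, hv⟩ : ∃ v : Fin N → ℂ, v ≠ 0 ∧ M *ᵥ v = μ • v := by
    rw [spectrum.mem_iff, Matrix.isUnit_iff_isUnit_det, isUnit_iff_ne_zero, not_ne_iff] at h
    obtain ⟨v, hv0, hv⟩ := Matrix.exists_mulVec_eq_zero_iff.mpr h
    refine ⟨v, hv0, ?_⟩
    rw [Matrix.sub_mulVec, sub_eq_zero] at hv
    rw [← hv, show (algebraMap ℂ (Matrix (Fin N) (Fin N) ℂ)) μ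
        = μ • (1 : Matrix (Fin N) (Fin N) ℂ) by simp [Algebra.algebraMap_eq_smul_one]]
    rw [Matrix.smul_mulVec, Matrix.one_mulVec]
  have hpow : ∀ k : ℕ, (M ^ k) *ᵥ v = μ ^ k • v := by
    intro k
    induction k with
    | zero => simp [Matrix.one_mulVec]
    | succ k ih =>
      rw [pow_succ', ← Matrix.mulVec_mulVec, ih, Matrix.mulVec_smul, hv, pow_succ',
        smul_smul, mul_comm]
  have hterm : ∀ (c : ℂ) (k : ℕ), (c • M ^ k) *ᵥ v = (c * μ ^ k) • v := fun c k => by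
    rw [Matrix.smul_mulVec, hpow k, smul_smul]
  have h1 : (aeval M p) *ᵥ v = p.eval μ • v := by
    rw [aeval_eq_sum_range, eval_eq_sum_range,
      show ((∑ i ∈ Finset.range (p.natDegree + 1), p.coeff i • M ^ i) *ᵥ v)
        = mulVecL v (∑ i ∈ Finset.range (p.natDegree + 1), p.coeff i • M ^ i) from rfl,
      map_sum, Finset.sum_smul]
    exact Finset.sum_congr rfl fun i _ => hterm _ i
  have h2 : (exp M) *ᵥ v = Complex.exp μ • v := by
    have hsum : Summable fun k : ℕ => (k !⁻¹ : ℂ) • M ^ k := expSeries_summable' M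
    have hL : Continuous (mulVecL (N := N) v) := LinearMap.continuous_of_finiteDimensional _
    have h3 : HasSum (fun k : ℕ => mulVecL v ((k !⁻¹ : ℂ) • M ^ k)) (mulVecL v (exp M)) := by
      rw [exp_eq_tsum ℂ]
      exact (hsum.hasSum.map (mulVecL v).toAddMonoidHom hL)
    have h4 : HasSum (fun k : ℕ => ((k !⁻¹ : ℂ) * μ ^ k) • v) (Complex.exp μ • v) := by
      have h5 : HasSum (fun k : ℕ => (k !⁻¹ : ℂ) * μ ^ k) (Complex.exp μ) := by
        have h6 : HasSum (fun k : ℕ => (k !⁻¹ : ℂ) • μ ^ k) (exp μ) := by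
          have hh := (expSeries_summable' (𝕂 := ℂ) (𝔸 := ℂ) μ).hasSum
          rw [exp_eq_tsum ℂ]
          exact hh
        simpa [smul_eq_mul, Complex.exp_eq_exp_ℂ] using h6
      exact h5.smul_const v
    have h7 : (fun k : ℕ => mulVecL v ((k !⁻¹ : ℂ) • M ^ k))
        = fun k : ℕ => ((k !⁻¹ : ℂ) * μ ^ k) • v := funext fun k => hterm _ k
    rw [h7] at h3
    exact (h3.unique h4) ▸ rfl
  have h8 : p.eval μ • v = Complex.exp μ • v := by rw [← h1, hp, h2]
  obtain ⟨i, hi⟩ := Function.ne_iff.mp hv0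
  have hq := congr_fun h8 i
  simp only [Pi.smul_apply, smul_eq_mul, Pi.zero_apply] at hq hi
  exact mul_right_cancel₀ hi hq
lemma matrix_nontrivial (hN : 0 < N) : Nontrivial (Matrix (Fin N) (Fin N) ℂ) := by
  refine ⟨0, 1, fun h => ?_⟩
  have := congr_fun (congr_fun h ⟨0, hN⟩) ⟨0, hN⟩
  simp [Matrix.one_apply] at this

lemma spectrum_exp_subset (hN : 0 < N) (M : Matrix (Fin N) (Fin N) ℂ) :
    spectrum ℂ (exp M) ⊆ (fun z => Complex.exp z) '' spectrum ℂ M := by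
  haveI := matrix_nontrivial hN
  obtain ⟨p, hp⟩ := exists_aeval_eq_exp M
  have hnon : (spectrum ℂ M).Nonempty := spectrum.nonempty M
  rw [← hp, spectrum.map_polynomial_aeval_of_nonempty M p hnon]
  rintro z ⟨μ, hμ, rfl⟩
  exact ⟨μ, hμ, (eval_eq_exp_of_mem_spectrum hμ hp).symm⟩


lemma pow_decay (hN : 0 < N) (B : Matrix (Fin N) (Fin N) ℂ)
    (hB : ∀ μ ∈ spectrum ℂ B, ‖μ‖₊ < 1) :
    ∃ d C : ℝ, 0 < d ∧ d < 1 ∧ 0 < C ∧ ∀ k : ℕ, ‖B ^ k‖ ≤ C * d ^ k := by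
  haveI := matrix_nontrivial hN
  have hnon : (spectrum ℂ B).Nonempty := spectrum.nonempty B
  have hρ : spectralRadius ℂ B < 1 := by
    have := spectrum.spectralRadius_lt_of_forall_lt B (r := 1) hB
    simpa using this
  obtain ⟨c, hc1, hc2⟩ := exists_between hρ
  have hgel := spectrum.pow_nnnorm_pow_one_div_tendsto_nhds_spectralRadius B
  have hev : ∀ᶠ k : ℕ in atTop, (‖B ^ k‖₊ : ℝ≥0∞) ^ (1 / (k : ℝ)) < c :=
    hgel.eventually_lt_const hc1
  have hc0 : c ≠ ⊤ := (hc2.trans_le le_top).ne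
  set d : ℝ := max c.toReal (1/2) with hd
  have hd0 : 0 < d := lt_max_of_lt_right (by norm_num)
  have hd1 : d < 1 := by
    apply max_lt _ (by norm_num)
    exact ENNReal.toReal_lt_of_lt_ofReal (by simpa [ENNReal.ofReal_one] using hc2)
  have hkey : ∀ᶠ k : ℕ in atTop, ‖B ^ k‖ ≤ d ^ k := by
    filter_upwards [hev, eventually_ge_atTop 1] with k hk hk1
    have hk0 : (k : ℝ) ≠ 0 := by positivity
    have h1 : (‖B ^ k‖₊ : ℝ≥0∞) ≤ c ^ (k : ℝ) := by
      calc (‖B ^ k‖₊ : ℝ≥0∞) = ((‖B ^ k‖₊ : ℝ≥0∞) ^ (1/(k:ℝ))) ^ (k:ℝ) := by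
            rw [← ENNReal.rpow_mul, one_div, inv_mul_cancel₀ hk0, ENNReal.rpow_one]
        _ ≤ c ^ (k:ℝ) := ENNReal.rpow_le_rpow hk.le (by positivity)
    have hfin : c ^ (k : ℝ) ≠ ⊤ := ENNReal.rpow_ne_top_of_nonneg (by positivity) hc0
    have h2 := ENNReal.toReal_mono hfin h1
    rw [ENNReal.coe_toReal, coe_nnnorm] at h2
    have h3 : (c ^ (k:ℝ)).toReal = c.toReal ^ k := by
      rw [← ENNReal.toReal_rpow, Real.rpow_natCast]
    rw [h3] at h2
    exact h2.trans (pow_le_pow_left₀ ENNReal.toReal_nonneg (le_max_left _ _) k)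
  obtain ⟨K, hK⟩ := eventually_atTop.mp hkey
  refine ⟨d, 1 + ∑ i ∈ Finset.range K, ‖B ^ i‖ / d ^ i, hd0, hd1, by positivity, fun k => ?_⟩
  rcases le_or_gt K k with h | h
  · calc ‖B ^ k‖ ≤ d ^ k := hK k h
      _ ≤ (1 + ∑ i ∈ Finset.range K, ‖B ^ i‖ / d ^ i) * d ^ k := by
          nlinarith [pow_pos hd0 k, Finset.sum_nonneg (fun i (_ : i ∈ Finset.range K) =>
            div_nonneg (norm_nonneg (B ^ i)) (pow_nonneg hd0.le i))]
  · have hmem : k ∈ Finset.range K := Finset.mem_range.mpr h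
    have h4 : ‖B ^ k‖ / d ^ k ≤ ∑ i ∈ Finset.range K, ‖B ^ i‖ / d ^ i :=
      Finset.single_le_sum (f := fun i => ‖B ^ i‖ / d ^ i)
        (fun i _ => div_nonneg (norm_nonneg _) (pow_nonneg hd0.le i)) hmem
    have h5 : 0 < d ^ k := pow_pos hd0 k
    rw [div_le_iff₀ h5] at h4
    nlinarith
lemma map_exp_complex (M : Matrix (Fin N) (Fin N) ℝ) :
    (exp M).map (algebraMap ℝ ℂ) = exp (M.map (algebraMap ℝ ℂ)) := by
  have hcont : Continuous ((algebraMap ℝ ℂ).mapMatrix :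
      Matrix (Fin N) (Fin N) ℝ →+* Matrix (Fin N) (Fin N) ℂ) := by
    exact Continuous.matrix_map continuous_id (continuous_algebraMap ℝ ℂ)
  have h := map_exp ((algebraMap ℝ ℂ).mapMatrix :
      Matrix (Fin N) (Fin N) ℝ →+* Matrix (Fin N) (Fin N) ℂ) hcont M
  rw [RingHom.mapMatrix_apply] at h
  exact h

lemma entry_norm_le {α : Type*} [NormedRing α] (B : Matrix (Fin N) (Fin N) α) (j k : Fin N) :
    ‖B j k‖ ≤ ‖B‖ := by
  have h1 : ‖B j k‖₊ ≤ ∑ k', ‖B j k'‖₊ :=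
    Finset.single_le_sum (f := fun k' => ‖B j k'‖₊) (fun _ _ => zero_le) (Finset.mem_univ k)
  have h2 : (∑ k', ‖B j k'‖₊) ≤ ‖B‖₊ := by
    rw [Matrix.linfty_opNNNorm_def]
    exact Finset.le_sup (f := fun i => ∑ j' : Fin N, ‖B i j'‖₊) (Finset.mem_univ j)
  exact_mod_cast h1.trans h2

lemma entry_decay (hN : 0 < N) (V : Matrix (Fin N) (Fin N) ℝ)
    (hV : ∀ z : ℂ, ((V.map (algebraMap ℝ ℂ)).charpoly).IsRoot z → 0 < z.re) :
    ∃ C ε : ℝ, 0 < ε ∧ 0 < C ∧ ∀ τ : ℝ, 0 ≤ τ → ∀ j k : Fin N,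
      |NormedSpace.exp ((-τ) • V) j k| ≤ C * Real.exp (-(ε * τ)) := by
  set A := V.map (algebraMap ℝ ℂ) with hA
  have hmapsmul : ∀ t : ℝ, ((-t) • V).map (algebraMap ℝ ℂ) = (-t) • A := by
    intro t
    ext i j
    simp only [Matrix.map_apply, Matrix.smul_apply, smul_eq_mul, hA, Complex.real_smul,
      Complex.coe_algebraMap, Complex.ofReal_mul, Complex.ofReal_neg]
  have hentry : ∀ (t : ℝ) (j k : Fin N),
      (exp ((-t) • A)) j k = ((exp ((-t) • V)) j k : ℂ) := by
    intro t j k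
    rw [← hmapsmul t, ← map_exp_complex]
    simp [Matrix.map_apply]
  set B := exp (-A) with hB
  have hspec : ∀ μ ∈ spectrum ℂ B, ‖μ‖₊ < 1 := by
    intro μ hμ
    obtain ⟨w, hw, rfl⟩ := spectrum_exp_subset hN (-A) hμ
    have hw' : -w ∈ spectrum ℂ A := by
      rw [← spectrum.neg_eq] at hw
      simpa using hw
    have hre : 0 < (-w).re := hV (-w) ((root_iff_mem_spectrum A (-w)).mp hw')
    have : ‖Complex.exp w‖ < 1 := by
      rw [Complex.norm_exp, ← Real.exp_zero]
      apply Real.exp_lt_exp.mpr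
      simpa using hre
    exact_mod_cast this
  obtain ⟨d, C₁, hd0, hd1, hC₁, hpow⟩ := pow_decay hN B hspec
  obtain ⟨M₀, hM₀⟩ := (isCompact_Icc (a := (0:ℝ)) (b := 1)).exists_bound_of_continuousOn
    (Continuous.continuousOn ((exp_continuous (𝔸 := Matrix (Fin N) (Fin N) ℂ)).comp
      ((continuous_neg).smul (continuous_const : Continuous fun _ : ℝ => A))))
  have hM₀0 : 0 ≤ M₀ := le_trans (norm_nonneg _) (hM₀ 0 (by norm_num))
  set ε := -Real.log d with hε
  have hlog : Real.log d < 0 := Real.log_neg hd0 hd1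
  have hεpos : 0 < ε := by rw [hε]; linarith
  refine ⟨C₁ * (M₀ + 1) * d⁻¹, ε, hεpos, by positivity, ?_⟩
  intro τ hτ j k
  set kk := ⌊τ⌋₊ with hkk
  have hτ1 : (kk : ℝ) ≤ τ := Nat.floor_le hτ
  have hτ2 : τ < kk + 1 := Nat.lt_floor_add_one τ
  set s := τ - kk with hs
  have hs0 : 0 ≤ s := by rw [hs]; linarith
  have hs1 : s ≤ 1 := by rw [hs]; linarith
  have hsplit : (-τ) • A = (-(kk:ℝ)) • A + (-s) • A := by
    rw [← add_smul]
    congr 1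
    rw [hs]
    ring
  have hcomm : Commute ((-(kk:ℝ)) • A) ((-s) • A) :=
    ((Commute.refl A).smul_left _).smul_right _
  have h1 : exp ((-τ) • A) = exp ((-(kk:ℝ)) • A) * exp ((-s) • A) := by
    rw [hsplit]
    exact exp_add_of_commute hcomm
  have h2 : exp ((-(kk:ℝ)) • A) = B ^ kk := by
    have : (-(kk:ℝ)) • A = (kk : ℕ) • (-A) := by
      rw [← Nat.cast_smul_eq_nsmul ℝ kk (-A), smul_neg, neg_smul]
    rw [this]; exact NormedSpace.exp_nsmul kk (-A)
  have hnorm : ‖exp ((-τ) • A)‖ ≤ (C₁ * d ^ kk) * (M₀ + 1) := by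
    rw [h1, h2]
    calc ‖B ^ kk * exp ((-s) • A)‖ ≤ ‖B ^ kk‖ * ‖exp ((-s) • A)‖ := norm_mul_le _ _
      _ ≤ (C₁ * d ^ kk) * (M₀ + 1) :=
        mul_le_mul (hpow kk) ((hM₀ s ⟨hs0, hs1⟩).trans (by linarith)) (norm_nonneg _)
          (by positivity)
  have hdk : d ^ kk ≤ Real.exp (-(ε * τ)) * d⁻¹ := by
    have he1 : d ^ kk = Real.exp ((kk : ℝ) * Real.log d) := by
      rw [Real.exp_nat_mul, Real.exp_log hd0]
    have h9 : (kk:ℝ) * Real.log d ≤ (τ - 1) * Real.log d :=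
      mul_le_mul_of_nonpos_right (by linarith) hlog.le
    have he2 : Real.exp ((τ - 1) * Real.log d) = Real.exp (-(ε * τ)) * d⁻¹ := by
      rw [sub_mul, one_mul, Real.exp_sub, Real.exp_log hd0, hε]
      rw [div_eq_mul_inv]
      congr 2
      ring
    rw [he1, ← he2]
    exact Real.exp_le_exp.mpr h9
  have hfin : |NormedSpace.exp ((-τ) • V) j k| = ‖(exp ((-τ) • A)) j k‖ := by
    rw [hentry τ j k, Complex.norm_real, Real.norm_eq_abs]
  rw [hfin]
  calc ‖(exp ((-τ) • A)) j k‖ ≤ ‖exp ((-τ) • A)‖ := entry_norm_le _ j k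
    _ ≤ (C₁ * d ^ kk) * (M₀ + 1) := hnorm
    _ ≤ (C₁ * (Real.exp (-(ε * τ)) * d⁻¹)) * (M₀ + 1) := by
        have := mul_le_mul_of_nonneg_left hdk hC₁.le
        nlinarith
    _ = C₁ * (M₀ + 1) * d⁻¹ * Real.exp (-(ε * τ)) := by ring
/-- entry evaluation as a linear map -/
noncomputable def entryL (j k : Fin N) : Matrix (Fin N) (Fin N) ℝ →L[ℝ] ℝ :=
  LinearMap.toContinuousLinearMap
    { toFun := fun B => B j k
      map_add' := fun _ _ => rfl
      map_smul' := fun _ _ => rfl }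

lemma hasDerivAt_entry (V : Matrix (Fin N) (Fin N) ℝ) (hdet : IsUnit V.det) (t : ℝ)
    (j k : Fin N) :
    HasDerivAt (fun t : ℝ => (-(V⁻¹) * NormedSpace.exp ((-t) • V)) j k)
      (NormedSpace.exp ((-t) • V) j k) t := by
  have h1 : HasDerivAt (fun t : ℝ => exp ((-t) • V)) ((-1 : ℝ) • (exp ((-t) • V) * V)) t := by
    exact (hasDerivAt_exp_smul_const (𝕂 := ℝ) V (-t)).scomp t (hasDerivAt_neg t)
  have h2 := h1.const_mul (-(V⁻¹))
  have h3 : -(V⁻¹) * ((-1 : ℝ) • (exp ((-t) • V) * V)) = exp ((-t) • V) := by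
    have hcomm : V * exp ((-t) • V) = exp ((-t) • V) * V :=
      (((Commute.refl V).smul_right (-t)).exp_right).eq
    rw [neg_one_smul, mul_neg, neg_mul, neg_neg, ← hcomm, ← mul_assoc,
      Matrix.nonsing_inv_mul V hdet, one_mul]
  rw [h3] at h2
  have h4 := (entryL j k).hasFDerivAt.comp_hasDerivAt t h2
  exact h4
lemma cont_entry (V : Matrix (Fin N) (Fin N) ℝ) (j k : Fin N) :
    Continuous fun τ : ℝ => NormedSpace.exp ((-τ) • V) j k := by
  letI : NormedRing (Matrix (Fin N) (Fin N) ℝ) := Matrix.linftyOpNormedRing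
  letI : NormedAlgebra ℝ (Matrix (Fin N) (Fin N) ℝ) := Matrix.linftyOpNormedAlgebra
  have h : Continuous fun τ : ℝ => exp ((-τ) • V) :=
    (exp_continuous (𝔸 := Matrix (Fin N) (Fin N) ℝ)).comp
      (continuous_neg.smul continuous_const)
  exact (continuous_apply k).comp ((continuous_apply j).comp h)
end Stmt2Aux

/-- If every complex eigenvalue of the real matrix `V` has strictly positive real
part, then `V` is invertible, the entrywise improper integral `∫_0^∞ exp(−τV) dτ`
converges, and it equals `V⁻¹`. -/
theorem stmt2 (n : ℕ) (V : Matrix (Fin n) (Fin n) ℝ)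
    (hV : ∀ z : ℂ, ((V.map (algebraMap ℝ ℂ)).charpoly).IsRoot z → 0 < z.re) :
    IsUnit V ∧
    (∀ j k : Fin n,
      IntegrableOn (fun τ : ℝ => NormedSpace.exp ((-τ) • V) j k) (Set.Ioi 0)) ∧
    (∀ j k : Fin n,
      ∫ τ in Set.Ioi (0:ℝ), NormedSpace.exp ((-τ) • V) j k = V⁻¹ j k) := by
  rcases Nat.eq_zero_or_pos n with hn | hn
  · subst hn
    refine ⟨?_, fun j => j.elim0, fun j => j.elim0⟩
    rw [Matrix.isUnit_iff_isUnit_det]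
    simp [Matrix.det_isEmpty]
  have hdet : IsUnit V.det := by
    rw [isUnit_iff_ne_zero]
    intro h0
    set A := V.map (algebraMap ℝ ℂ) with hA
    have hdetA : A.det = 0 := by
      rw [hA, show V.map (algebraMap ℝ ℂ) = (algebraMap ℝ ℂ).mapMatrix V from rfl,
        ← RingHom.map_det, h0, map_zero]
    have hroot : A.charpoly.IsRoot 0 := by
      rw [Polynomial.IsRoot.def, ← Polynomial.coeff_zero_eq_eval_zero]
      have := Matrix.det_eq_sign_charpoly_coeff A
      rw [hdetA] at this
      have h2 : ((-1 : ℂ)) ^ Fintype.card (Fin n) ≠ 0 := by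
        simp
      exact (mul_eq_zero.mp this.symm).resolve_left h2
    simpa using hV 0 hroot
  have hunit : IsUnit V := (Matrix.isUnit_iff_isUnit_det V).mpr hdet
  obtain ⟨C, ε, hε, hC, hbound⟩ := Stmt2Aux.entry_decay hn V hV
  have hint : ∀ j k : Fin n,
      IntegrableOn (fun τ : ℝ => NormedSpace.exp ((-τ) • V) j k) (Set.Ioi 0) := by
    intro j k
    have hg : IntegrableOn (fun τ : ℝ => C * Real.exp (-(ε * τ))) (Set.Ioi 0) := by
      have := (exp_neg_integrableOn_Ioi 0 hε).const_mul C
      simpa [neg_mul, IntegrableOn] using this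
    refine hg.integrable.mono' ((Stmt2Aux.cont_entry V j k).aestronglyMeasurable) ?_
    filter_upwards [ae_restrict_mem measurableSet_Ioi] with τ hτ
    have := hbound τ (le_of_lt hτ) j k
    simpa [Real.norm_eq_abs] using this
  refine ⟨hunit, hint, fun j k => ?_⟩
  have hderiv : ∀ t ∈ Set.Ici (0:ℝ),
      HasDerivAt (fun t : ℝ => (-(V⁻¹) * NormedSpace.exp ((-t) • V)) j k)
        (NormedSpace.exp ((-t) • V) j k) t :=
    fun t _ => Stmt2Aux.hasDerivAt_entry V hdet t j k
  have htend : Filter.Tendsto (fun t : ℝ => (-(V⁻¹) * NormedSpace.exp ((-t) • V)) j k)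
      Filter.atTop (nhds 0) := by
    have hb : ∀ᶠ t : ℝ in Filter.atTop, ‖(-(V⁻¹) * NormedSpace.exp ((-t) • V)) j k‖ ≤
        (∑ l : Fin n, |(-(V⁻¹)) j l|) * (C * Real.exp (-(ε * t))) := by
      filter_upwards [Filter.eventually_ge_atTop (0:ℝ)] with t ht
      rw [Matrix.mul_apply, Real.norm_eq_abs]
      calc |∑ l, (-(V⁻¹)) j l * NormedSpace.exp ((-t) • V) l k|
          ≤ ∑ l, |(-(V⁻¹)) j l * NormedSpace.exp ((-t) • V) l k| :=
            Finset.abs_sum_le_sum_abs _ _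
        _ ≤ ∑ l : Fin n, |(-(V⁻¹)) j l| * (C * Real.exp (-(ε * t))) := by
            refine Finset.sum_le_sum fun l _ => ?_
            rw [abs_mul]
            exact mul_le_mul_of_nonneg_left (hbound t ht l k) (abs_nonneg _)
        _ = (∑ l : Fin n, |(-(V⁻¹)) j l|) * (C * Real.exp (-(ε * t))) := by
            rw [Finset.sum_mul]
    have hg0 : Filter.Tendsto (fun t : ℝ => (∑ l : Fin n, |(-(V⁻¹)) j l|) *
        (C * Real.exp (-(ε * t)))) Filter.atTop (nhds 0) := by
      have h1 : Filter.Tendsto (fun t : ℝ => Real.exp (-(ε * t))) Filter.atTop (nhds 0) :=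
        Real.tendsto_exp_neg_atTop_nhds_zero.comp
          (Filter.Tendsto.const_mul_atTop hε Filter.tendsto_id)
      have h2 := (h1.const_mul C).const_mul (∑ l : Fin n, |(-(V⁻¹)) j l|)
      simpa [mul_assoc] using h2
    exact squeeze_zero_norm' hb hg0
  have hFTC := integral_Ioi_of_hasDerivAt_of_tendsto' hderiv (hint j k) htend
  rw [hFTC, show (-(0:ℝ)) • V = (0:ℝ) • V by norm_num, zero_smul, NormedSpace.exp_zero, mul_one]
  simp [Matrix.neg_apply]
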